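/- arXiv:1809.09033 — 3 statements merged into one kernel-verified Lean document; each statement's English description precedes it below -/
import Mathlib

section
/- If a densely non-increasing sequence (u_β)_{β<α} in a linear order has finite range {u_β ∣ β < α}, then it is non-increasing: β < β' < α implies u_β ≥ u_{β'}. -/
/-- The sequence `u` (restricted below `α`) is densely non-increasing. -/
def DenselyNonIncreasing {U : Type*} [LinearOrder U] (u : Ordinal → U) (α : Ordinal) : Prop :=
  ∀ γ γ', γ < γ' → γ' ≤ α →
    (∀ β, γ ≤ β → β < γ' → u β = u γ) ∨ ∃ β β', γ ≤ β ∧ β < β' ∧ β' < γ' ∧ u β' < u β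

theorem denselyNonIncreasing_finite_range_nonIncreasing {U : Type*} [LinearOrder U]
    (u : Ordinal → U) (α : Ordinal)
    (hd : DenselyNonIncreasing u α)
    (hfin : (u '' Set.Iio α).Finite) :
    ∀ β β' : Ordinal, β < β' → β' < α → u β' ≤ u β := by
  by_contra h
  push_neg at h
  obtain ⟨b0, b0', hb0, hb0', hub0⟩ := h
  -- choose a minimal "bad endpoint" β'
  obtain ⟨β', hβ'P, hmin⟩ := wellFounded_lt.has_min
    {x : Ordinal | ∃ b, b < x ∧ x < α ∧ u b < u x} ⟨b0', b0, hb0, hb0', hub0⟩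
  obtain ⟨β, hββ', hβ'α, huβ⟩ := hβ'P
  -- u is non-increasing on [β, β')
  have mono : ∀ ε ε', β ≤ ε → ε < ε' → ε' < β' → u ε' ≤ u ε := by
    intro ε ε' hε hεε' hε'
    by_contra hlt
    push_neg at hlt
    exact hmin ε' ⟨ε, hεε', hε'.trans hβ'α, hlt⟩ hε'
  -- the image of [β, β') is finite and nonempty
  have hTfin : (u '' Set.Ico β β').Finite :=
    hfin.subset (Set.image_mono fun x hx => lt_trans hx.2 hβ'α)
  have hTne : (u '' Set.Ico β β').Nonempty := ⟨u β, β, ⟨le_refl β, hββ'⟩, rfl⟩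
  obtain ⟨c, hcT, hcmin⟩ := Set.exists_min_image _ id hTfin hTne
  obtain ⟨δc, hδc, hδcc⟩ := hcT
  -- minimal index attaining c
  obtain ⟨γ0, hγ0P, hγ0min⟩ := wellFounded_lt.has_min
    {x : Ordinal | β ≤ x ∧ x < β' ∧ u x = c} ⟨δc, hδc.1, hδc.2, hδcc⟩
  obtain ⟨hβγ0, hγ0β', hγ0c⟩ := hγ0P
  -- u is constantly c on [γ0, β')
  have hconst : ∀ δ, γ0 ≤ δ → δ < β' → u δ = c := by
    intro δ hγ0δ hδβ'
    have h1 : c ≤ u δ := hcmin (u δ) ⟨δ, ⟨hβγ0.trans hγ0δ, hδβ'⟩, rfl⟩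
    rcases eq_or_lt_of_le hγ0δ with rfl | hlt
    · exact hγ0c
    · exact le_antisymm ((mono γ0 δ hβγ0 hlt hδβ').trans_eq hγ0c) h1
  have hcβ : c ≤ u β := hcmin (u β) ⟨β, ⟨le_refl β, hββ'⟩, rfl⟩
  have hcβ' : c < u β' := lt_of_le_of_lt hcβ huβ
  -- apply density on [γ0, β' + 1)
  have hsucc : β' + 1 ≤ α := by
    rw [Ordinal.add_one_eq_succ]
    exact Order.succ_le_of_lt hβ'α
  rcases hd γ0 (β' + 1) (hγ0β'.trans (lt_add_one β')) hsucc with hc | ⟨b, b', hb1, hb2, hb3, hb4⟩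
  · have := hc β' (le_of_lt hγ0β') (lt_add_one β')
    rw [hγ0c] at this
    exact absurd this (ne_of_gt hcβ')
  · have hbβ' : b < β' := lt_of_lt_of_le hb2 (Order.lt_add_one_iff.mp hb3)
    have hub : u b = c := hconst b hb1 hbβ'
    rcases lt_or_eq_of_le (Order.lt_add_one_iff.mp hb3) with hb'β' | rfl
    · have : u b' = c := hconst b' (hb1.trans (le_of_lt hb2)) hb'β'
      rw [hub, this] at hb4
      exact lt_irrefl c hb4
    · rw [hub] at hb4
      exact absurd hb4 (not_lt_of_gt hcβ')
end

section
/- Let (u_β)_{β<α} be a densely non-increasing sequence in a linear order that is not non-increasing. Then there is a greatest ordinal α' < α such that the restriction (u_β)_{β<α'} is non-increasing; moreover this α' is a limit ordinal, and the sequence is not ultimately constant in α' (for every γ < α' there exist γ ≤ β < β' < α' with u_β > u_{β'}). -/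
/-- The sequence `u` is non-increasing on indices below `γ`. -/
def NonIncreasingBelow {U : Type*} [LinearOrder U] (u : Ordinal → U) (γ : Ordinal) : Prop :=
  ∀ β β' : Ordinal, β < β' → β' < γ → u β' ≤ u β

theorem denselyNonIncreasing_greatest_nonIncreasing_prefix {U : Type*} [LinearOrder U]
    (u : Ordinal → U) (α : Ordinal)
    (hd : DenselyNonIncreasing u α)
    (hnot : ¬ NonIncreasingBelow u α) :
    ∃ α' : Ordinal,
      IsGreatest {γ : Ordinal | γ < α ∧ NonIncreasingBelow u γ} α' ∧
      Order.IsSuccLimit α' ∧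
      ∀ γ < α', ∃ β β' : Ordinal, γ ≤ β ∧ β < β' ∧ β' < α' ∧ u β' < u β := by
  classical
  set S : Set Ordinal := {γ | ¬ NonIncreasingBelow u γ} with hS
  have hαS : α ∈ S := hnot
  set μ := sInf S with hμdef
  have hμS : μ ∈ S := csInf_mem ⟨α, hαS⟩
  have hμα : μ ≤ α := csInf_le' hαS
  have hlt_not : ∀ γ < μ, NonIncreasingBelow u γ := by
    intro γ hγ
    by_contra h
    exact absurd (csInf_le' (show γ ∈ S from h)) (not_le_of_gt hγ)
  -- μ is a successor
  have hμ0 : μ ≠ 0 := by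
    intro h
    apply hμS
    rw [h]
    intro β β' _ hβ'
    exact absurd hβ' (by simp)
  have hμnotlim : ¬ Order.IsSuccLimit μ := by
    intro hl
    apply hμS
    intro β β' hββ' hβ'μ
    exact hlt_not _ (hl.succ_lt hβ'μ) β β' hββ' (Order.lt_succ _)
  obtain ⟨δ, hδ⟩ : ∃ a, μ = Order.succ a :=
    (((Ordinal.zero_or_succ_or_isSuccLimit μ).resolve_left hμ0).resolve_right hμnotlim).imp fun _ h => h.symm
  have hNIBδ : NonIncreasingBelow u δ := hlt_not δ (by rw [hδ]; exact Order.lt_succ _)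
  have hδα : δ < α := lt_of_lt_of_le (by rw [hδ]; exact Order.lt_succ _) hμα
  -- failure at δ+1 gives β < δ with u β < u δ
  obtain ⟨β, β', hββ', hβ'μ, hub⟩ :
      ∃ β β', β < β' ∧ β' < μ ∧ u β < u β' := by
    have := hμS
    rw [hS] at this
    simp only [Set.mem_setOf_eq, NonIncreasingBelow, not_forall, not_le] at this
    obtain ⟨β, β', h1, h2, h3⟩ := this
    exact ⟨β, β', h1, h2, h3⟩
  have hβ'δ : β' = δ := by
    rcases lt_or_eq_of_le (show β' ≤ δ by
      rw [hδ] at hβ'μ; exact Order.lt_succ_iff.mp hβ'μ) with h | h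
    · exact absurd (hNIBδ β β' hββ' h) (not_le_of_gt hub)
    · exact h
  rw [hβ'δ] at hββ' hub
  -- key property
  have key : ∀ γ < δ, ∃ b b' : Ordinal, γ ≤ b ∧ b < b' ∧ b' < δ ∧ u b' < u b := by
    intro γ hγδ
    by_contra h
    push_neg at h
    have hconst : ∀ b, γ ≤ b → b < δ → u b = u γ := by
      intro b hγb hbδ
      rcases eq_or_lt_of_le hγb with rfl | hlt
      · rfl
      · exact le_antisymm (hNIBδ γ b hlt hbδ) (h γ b le_rfl hlt hbδ)
    have huγδ : u γ < u δ := by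
      rcases le_or_gt γ β with hc | hc
      · calc u γ = u β := (hconst β hc hββ').symm
          _ < u δ := hub
      · exact lt_of_le_of_lt (hNIBδ β γ hc hγδ) hub
    have hsucc : δ < Order.succ δ := Order.lt_succ _
    rcases hd γ (Order.succ δ) (hγδ.trans hsucc) (by rw [← hδ]; exact hμα) with hc | hc
    · exact absurd ((hc δ hγδ.le hsucc).symm) (ne_of_lt huγδ)
    · obtain ⟨b, b', hγb, hbb', hb'μ, hdec⟩ := hc
      rcases lt_or_eq_of_le (Order.lt_succ_iff.mp hb'μ) with hb'δ | heq
      · have h1 := hconst b hγb (hbb'.trans hb'δ)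
        have h2 := hconst b' (hγb.trans hbb'.le) hb'δ
        rw [h1, h2] at hdec
        exact absurd hdec (lt_irrefl _)
      · have hbδ : u b = u γ := hconst b hγb (heq ▸ hbb')
        rw [heq, hbδ] at hdec
        exact absurd hdec (not_lt_of_gt huγδ)
  -- δ is a limit
  have hlim : Order.IsSuccLimit δ := by
    rw [Ordinal.isSuccLimit_iff, Order.isSuccPrelimit_iff_succ_lt]
    constructor
    · intro h
      subst h
      exact absurd hββ' (by simp)
    · intro a haδ
      obtain ⟨b, b', hab, hbb', hb'δ, _⟩ := key a haδ
      exact lt_of_le_of_lt (Order.succ_le_of_lt (lt_of_le_of_lt hab hbb')) hb'δ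
  refine ⟨δ, ⟨⟨hδα, hNIBδ⟩, ?_⟩, hlim, key⟩
  intro γ hγ
  by_contra h
  push_neg at h
  apply hμS
  intro b b' hbb' hb'μ
  exact hγ.2 b b' hbb' (lt_of_lt_of_le hb'μ (by rw [hδ]; exact Order.succ_le_of_lt h))
end

section
/- Let u be a finite Lyndon word and x a finite word such that x ◁ u, i.e., x = y·a·x' and u = y·b·u' for some words y, x', u' and letters a < b. If x = v₁v₂⋯v_m is the unique non-increasing Lyndon factorization of x, then uⁿ·v₁·v₂⋯v_m is the unique non-increasing Lyndon factorization of uⁿx, for every n ≥ 0 (when x is nonempty). -/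
/-- A finite word is a Lyndon word if it is nonempty and lexicographically
strictly smaller than all of its proper nonempty suffixes. -/
def IsLyndon {A : Type*} [LinearOrder A] (w : List A) : Prop :=
  w ≠ [] ∧ ∀ i : ℕ, 0 < i → i < w.length → w < w.drop i


/-- `x ◁ u`: `x` and `u` agree on a common prefix and then `x` has a strictly
smaller letter than `u`. -/
def LtStr {A : Type*} [LinearOrder A] (x u : List A) : Prop :=
  ∃ (y x' u' : List A) (a b : A), a < b ∧ x = y ++ a :: x' ∧ u = y ++ b :: u'

section Aux
variable {A : Type*} [LinearOrder A]

lemma myNotLexAppend {s r : List A} : ¬ List.Lex (· < ·) (s ++ r) s := by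
  induction s with
  | nil => intro h; cases h
  | cons a s ih =>
    intro h
    cases h with
    | cons h => exact ih h
    | rel h => exact lt_irrefl _ h

lemma myPrefixLe {s t : List A} (h : s <+: t) : s ≤ t := by
  obtain ⟨r, rfl⟩ := h
  exact le_of_not_gt fun hlt => myNotLexAppend hlt

lemma myLyndonLtSuffix {w s : List A} (hw : IsLyndon w) (hs : s <:+ w) (hne : s ≠ [])
    (hpr : s.length < w.length) : w < s := by
  obtain ⟨p, rfl⟩ := hs
  have hsp : 0 < s.length := List.length_pos_iff.mpr hne
  have h1 : 0 < p.length := by simp only [List.length_append] at hpr; omega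
  have h2 : p.length < (p ++ s).length := by simp only [List.length_append]; omega
  have := hw.2 p.length h1 h2
  simpa [List.drop_left] using this

lemma myExistsChunk : ∀ (M : List (List A)) (t : List A), t ≠ [] → t <+: M.flatten →
    ∃ p m, m ∈ M ∧ p ≠ [] ∧ p <+: m ∧ p <:+ t := by
  intro M
  induction M with
  | nil =>
    intro t ht hpre
    simp only [List.flatten_nil, List.prefix_nil] at hpre
    exact absurd hpre ht
  | cons m₁ M' ih =>
    intro t ht hpre
    simp only [List.flatten_cons] at hpre
    by_cases hlen : t.length ≤ m₁.length
    · exact ⟨t, m₁, List.mem_cons_self, ht,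
        List.prefix_of_prefix_length_le hpre (List.prefix_append _ _) hlen,
        List.suffix_refl t⟩
    · push_neg at hlen
      have hm1t : m₁ <+: t :=
        List.prefix_of_prefix_length_le (List.prefix_append _ _) hpre hlen.le
      obtain ⟨t', rfl⟩ := hm1t
      rcases eq_or_ne t' [] with rfl | ht'
      · exact ⟨m₁, m₁, List.mem_cons_self, by simpa using ht, List.prefix_refl _, by simp⟩
      · have ht'pre : t' <+: M'.flatten := by
          obtain ⟨r, hr⟩ := hpre
          rw [List.append_assoc] at hr
          exact ⟨r, List.append_cancel_left hr⟩
        obtain ⟨p, m, hm, hp, hpm, hps⟩ := ih t' ht' ht'pre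
        exact ⟨p, m, List.mem_cons_of_mem _ hm, hp, hpm,
          hps.trans (List.suffix_append _ _)⟩

lemma myFactorHeadEq {a b : List A} {L M : List (List A)}
    (hf : a ++ L.flatten = b ++ M.flatten)
    (ha : IsLyndon a) (hb : IsLyndon b)
    (hM : ∀ w ∈ M, w ≤ b)
    (hlen : b.length ≤ a.length) : a = b := by
  have hbpre : b <+: a ++ L.flatten := by rw [hf]; exact List.prefix_append _ _
  have hba : b <+: a :=
    List.prefix_of_prefix_length_le hbpre (List.prefix_append _ _) hlen
  rcases eq_or_lt_of_le hlen with heq | hlt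
  · exact (hba.eq_of_length heq).symm
  obtain ⟨t, rfl⟩ := hba
  exfalso
  have ht : t ≠ [] := by
    rintro rfl
    simp at hlt
  have htpre : t <+: M.flatten := by
    rw [List.append_assoc] at hf
    exact ⟨L.flatten, (List.append_cancel_left hf)⟩
  obtain ⟨p, m, hm, hp, hpm, hps⟩ := myExistsChunk M t ht htpre
  have hpa : p <:+ b ++ t := hps.trans (List.suffix_append _ _)
  have hbpos : 0 < b.length := List.length_pos_iff.mpr hb.1
  have hplen : p.length < (b ++ t).length := by
    have := hps.length_le
    simp only [List.length_append]
    omega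
  have h1 : (b ++ t) < p := myLyndonLtSuffix ha hpa hp hplen
  have h2 : p ≤ b ++ t :=
    le_trans (myPrefixLe hpm) (le_trans (hM m hm) (myPrefixLe (List.prefix_append _ _)))
  exact absurd h1 (not_lt.mpr h2)

lemma myFactorizationUnique : ∀ (L M : List (List A)), L.flatten = M.flatten →
    (∀ w ∈ L, IsLyndon w) → (∀ w ∈ M, IsLyndon w) →
    L.Chain' (fun a b => b ≤ a) → M.Chain' (fun a b => b ≤ a) → L = M := by
  haveI : IsTrans (List A) (fun a b => b ≤ a) := ⟨fun _ _ _ h1 h2 => le_trans h2 h1⟩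
  intro L
  induction L with
  | nil =>
    intro M hf hL hM _ _
    cases M with
    | nil => rfl
    | cons m M' =>
      exfalso
      simp only [List.flatten_nil, List.flatten_cons] at hf
      exact (hM m (List.mem_cons_self)).1 (List.append_eq_nil_iff.mp hf.symm).1
  | cons a L' ih =>
    intro M hf hL hM hcL hcM
    cases M with
    | nil =>
      exfalso
      simp only [List.flatten_nil, List.flatten_cons] at hf
      exact (hL a (List.mem_cons_self)).1 (List.append_eq_nil_iff.mp hf).1
    | cons b M' =>
      have hML : ∀ w ∈ M', w ≤ b := fun w hw =>
        (List.pairwise_cons.mp (List.isChain_iff_pairwise.mp hcM)).1 w hw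
      have hLL : ∀ w ∈ L', w ≤ a := fun w hw =>
        (List.pairwise_cons.mp (List.isChain_iff_pairwise.mp hcL)).1 w hw
      simp only [List.flatten_cons] at hf
      have hab : a = b := by
        rcases le_total b.length a.length with h | h
        · exact myFactorHeadEq hf (hL a (List.mem_cons_self))
            (hM b (List.mem_cons_self)) hML h
        · exact (myFactorHeadEq hf.symm (hM b (List.mem_cons_self))
            (hL a (List.mem_cons_self)) hLL h).symm
      subst hab
      have hft : L'.flatten = M'.flatten := List.append_cancel_left hf
      rw [ih M' hft (fun w hw => hL w (List.mem_cons_of_mem _ hw))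
        (fun w hw => hM w (List.mem_cons_of_mem _ hw)) hcL.tail hcM.tail]

end Aux

theorem lyndon_factorization_pow_mul {A : Type*} [LinearOrder A]
    (u x : List A) (hu : IsLyndon u) (hxu : LtStr x u) (hx : x ≠ [])
    (L : List (List A))
    (hLjoin : L.flatten = x) (hLly : ∀ w ∈ L, IsLyndon w)
    (hLmono : L.Chain' (fun a b => b ≤ a)) (n : ℕ) :
    ((List.replicate n u ++ L).flatten = (List.replicate n u).flatten ++ x ∧
      (∀ w ∈ List.replicate n u ++ L, IsLyndon w) ∧
      (List.replicate n u ++ L).Chain' (fun a b => b ≤ a)) ∧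
    ∀ M : List (List A),
      M.flatten = (List.replicate n u).flatten ++ x →
      (∀ w ∈ M, IsLyndon w) → M.Chain' (fun a b => b ≤ a) →
      M = List.replicate n u ++ L := by
  -- L is nonempty
  obtain ⟨v₁, L', rfl⟩ : ∃ v₁ L', L = v₁ :: L' := by
    cases L with
    | nil => exact absurd hLjoin.symm hx
    | cons v₁ L' => exact ⟨v₁, L', rfl⟩
  -- first factor of x is ≤ u
  have hv₁u : v₁ ≤ u := by
    obtain ⟨y, x', u', a, b, hab, hxeq, hueq⟩ := hxu
    have hv₁x : v₁ <+: x := hLjoin ▸ List.prefix_append _ _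
    rcases le_or_gt v₁.length y.length with hl | hl
    · have h1 : v₁ <+: y := by
        apply List.prefix_of_prefix_length_le (hxeq ▸ hv₁x) _ hl
        exact List.prefix_append _ _
      exact myPrefixLe (h1.trans (hueq ▸ List.prefix_append _ _))
    · have h2 : (y ++ [a]) <+: v₁ := by
        apply List.prefix_of_prefix_length_le _ hv₁x (by simp; omega)
        rw [hxeq]
        simp
      obtain ⟨r, hr⟩ := h2
      have hv₁eq : v₁ = y ++ a :: r := by rw [← hr]; simp
      have : List.Lex (· < ·) (y ++ a :: r) (y ++ b :: u') :=
        List.Lex.append_left _ (List.Lex.rel hab) y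
      rw [hv₁eq, hueq]
      exact le_of_lt this
  -- existence part
  have hchain : ∀ m : ℕ, (List.replicate m u ++ v₁ :: L').Chain' (fun a b => b ≤ a) := by
    intro m
    induction m with
    | zero => simpa using hLmono
    | succ k ih =>
      rw [List.replicate_succ, List.cons_append]
      refine List.isChain_cons.mpr ⟨?_, ih⟩
      intro y hy
      cases k with
      | zero => simp at hy; subst hy; exact hv₁u
      | succ k' => rw [List.replicate_succ, List.cons_append, List.head?_cons] at hy
                   cases hy; exact le_refl u
  have hly : ∀ w ∈ List.replicate n u ++ v₁ :: L', IsLyndon w := by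
    intro w hw
    rcases List.mem_append.mp hw with h | h
    · rw [List.eq_of_mem_replicate h]; exact hu
    · exact hLly w h
  have hfl : (List.replicate n u ++ v₁ :: L').flatten
      = (List.replicate n u).flatten ++ x := by
    rw [List.flatten_append, hLjoin]
  refine ⟨⟨hfl, hly, hchain n⟩, ?_⟩
  intro M hMf hMly hMc
  exact myFactorizationUnique M _ (by rw [hMf, hfl]) hMly hly hMc (hchain n)
end
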